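/- In the formal power series ring ℤ[[x,y,z]], the coefficient of x^{m₁}y^{m₂}z^{m₃} in 1/((1-xy)(1-xz)(1-yz)) equals 1 if m₁ + m₂ + m₃ is even and m₁ ≤ m₂ + m₃, m₂ ≤ m₁ + m₃, m₃ ≤ m₁ + m₂; and equals 0 otherwise. -/

import Mathlib

open MvPowerSeries Finsupp

noncomputable def M (p q r : ℕ) : MvPowerSeries (Fin 3) ℤ :=
  MvPowerSeries.monomial (R := ℤ) (single 0 p + single 1 q + single 2 r) 1

lemma tri_add (p q r p' q' r' : ℕ) :
    (single 0 p + single 1 q + single 2 r : Fin 3 →₀ ℕ) + (single 0 p' + single 1 q' + single 2 r')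
      = single 0 (p+p') + single 1 (q+q') + single 2 (r+r') := by
  ext i; fin_cases i <;> simp [Finsupp.single_apply]

lemma tri_le (p q r a b c : ℕ) :
    (single 0 p + single 1 q + single 2 r : Fin 3 →₀ ℕ) ≤ single 0 a + single 1 b + single 2 c
      ↔ p ≤ a ∧ q ≤ b ∧ r ≤ c := by
  rw [Finsupp.le_def]
  constructor
  · intro h; exact ⟨by simpa using h 0, by simpa using h 1, by simpa using h 2⟩
  · rintro ⟨h1, h2, h3⟩ i; fin_cases i <;> simp [Finsupp.single_apply] <;> omega

lemma tri_sub (p q r a b c : ℕ) :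
    (single 0 a + single 1 b + single 2 c : Fin 3 →₀ ℕ) - (single 0 p + single 1 q + single 2 r)
      = single 0 (a-p) + single 1 (b-q) + single 2 (c-r) := by
  ext i; fin_cases i <;> simp [Finsupp.single_apply, Finsupp.tsub_apply]

lemma tri_eq_zero (a b c : ℕ) :
    (single 0 a + single 1 b + single 2 c : Fin 3 →₀ ℕ) = 0 ↔ a = 0 ∧ b = 0 ∧ c = 0 := by
  rw [Finsupp.ext_iff]
  constructor
  · intro h; exact ⟨by simpa using h 0, by simpa using h 1, by simpa using h 2⟩
  · rintro ⟨rfl, rfl, rfl⟩ i; simp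

lemma key (p q r a b c : ℕ) (G : MvPowerSeries (Fin 3) ℤ) :
    MvPowerSeries.coeff (R := ℤ) (single 0 a + single 1 b + single 2 c) (M p q r * G)
      = if p ≤ a ∧ q ≤ b ∧ r ≤ c then
          MvPowerSeries.coeff (R := ℤ) (single 0 (a-p) + single 1 (b-q) + single 2 (c-r)) G else 0 := by
  rw [M, MvPowerSeries.coeff_monomial_mul]
  by_cases h : p ≤ a ∧ q ≤ b ∧ r ≤ c
  · rw [if_pos ((tri_le p q r a b c).2 h), if_pos h, one_mul, tri_sub]
  · rw [if_neg (fun hh => h ((tri_le p q r a b c).1 hh)), if_neg h]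

/-- Solve the recurrence `(1 - M p q r) * H = K` for coefficients of `H`. -/
lemma solve_rec (p q r : ℕ) (hpqr : 0 < p + q + r) (H K : MvPowerSeries (Fin 3) ℤ)
    (hHK : (1 - M p q r) * H = K)
    (f k : ℕ → ℕ → ℕ → ℤ)
    (hk : ∀ a b c, MvPowerSeries.coeff (R := ℤ) (single 0 a + single 1 b + single 2 c) K = k a b c)
    (hrec : ∀ a b c, f a b c
      = k a b c + (if p ≤ a ∧ q ≤ b ∧ r ≤ c then f (a-p) (b-q) (c-r) else 0)) :
    ∀ a b c, MvPowerSeries.coeff (R := ℤ) (single 0 a + single 1 b + single 2 c) H = f a b c := by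
  have hcoeff : ∀ a b c : ℕ,
      MvPowerSeries.coeff (R := ℤ) (single 0 a + single 1 b + single 2 c) H
        = k a b c + (if p ≤ a ∧ q ≤ b ∧ r ≤ c then
            MvPowerSeries.coeff (R := ℤ) (single 0 (a-p) + single 1 (b-q) + single 2 (c-r)) H else 0) := by
    intro a b c
    have h := congrArg (MvPowerSeries.coeff (R := ℤ) (single 0 a + single 1 b + single 2 c)) hHK
    rw [sub_mul, one_mul, map_sub, key, hk] at h
    linarith [h]
  suffices Hs : ∀ N, ∀ a b c : ℕ, a + b + c < N →
      MvPowerSeries.coeff (R := ℤ) (single 0 a + single 1 b + single 2 c) H = f a b c by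
    exact fun a b c => Hs (a + b + c + 1) a b c (by omega)
  intro N
  induction N with
  | zero => intro a b c h; omega
  | succ n IH =>
    intro a b c hlt
    rw [hcoeff, hrec]
    congr 1
    split_ifs with h
    · exact IH _ _ _ (by omega)
    · rfl

noncomputable def ind1 (a b c : ℕ) : ℤ := if a = b ∧ c = 0 then 1 else 0
noncomputable def ind2 (a b c : ℕ) : ℤ := if a = b + c then 1 else 0

lemma ind1_rec (a b c : ℕ) :
    ind1 a b c = (if a = 0 ∧ b = 0 ∧ c = 0 then 1 else 0)
      + (if 1 ≤ a ∧ 1 ≤ b ∧ 0 ≤ c then ind1 (a-1) (b-1) (c-0) else 0) := by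
  simp only [ind1]
  split_ifs <;> omega

lemma ind2_rec (a b c : ℕ) :
    ind2 a b c = ind1 a b c
      + (if 1 ≤ a ∧ 0 ≤ b ∧ 1 ≤ c then ind2 (a-1) (b-0) (c-1) else 0) := by
  simp only [ind1, ind2]
  split_ifs <;> omega

noncomputable def ind (a b c : ℕ) : ℤ :=
  if Even (a + b + c) ∧ a ≤ b + c ∧ b ≤ a + c ∧ c ≤ a + b then 1 else 0

lemma ind_rec (a b c : ℕ) :
    ind a b c = ind2 a b c
      + (if 0 ≤ a ∧ 1 ≤ b ∧ 1 ≤ c then ind (a-0) (b-1) (c-1) else 0) := by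
  simp only [ind, ind2, Nat.even_iff]
  split_ifs <;> omega

theorem stmt18
    (x y z : MvPowerSeries (Fin 3) ℤ)
    (hx : x = MvPowerSeries.X 0) (hy : y = MvPowerSeries.X 1) (hz : z = MvPowerSeries.X 2)
    (G : MvPowerSeries (Fin 3) ℤ)
    (hG : (1 - x * y) * (1 - x * z) * (1 - y * z) * G = 1) :
    ∀ m₁ m₂ m₃ : ℕ,
      MvPowerSeries.coeff (R := ℤ)
          (Finsupp.single 0 m₁ + Finsupp.single 1 m₂ + Finsupp.single 2 m₃) G =
        if Even (m₁ + m₂ + m₃) ∧ m₁ ≤ m₂ + m₃ ∧ m₂ ≤ m₁ + m₃ ∧ m₃ ≤ m₁ + m₂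
        then 1 else 0 := by
  have hxy : x * y = M 1 1 0 := by
    rw [hx, hy, X_def, X_def, monomial_mul_monomial, one_mul, M, Finsupp.single_zero, add_zero]
  have hxz : x * z = M 1 0 1 := by
    rw [hx, hz, X_def, X_def, monomial_mul_monomial, one_mul, M, Finsupp.single_zero]
    rw [add_zero]
  have hyz : y * z = M 0 1 1 := by
    rw [hy, hz, X_def, X_def, monomial_mul_monomial, one_mul, M, Finsupp.single_zero]
    rw [zero_add]
  -- step 1
  have h1 : (1 - M 1 1 0) * ((1 - M 1 0 1) * ((1 - M 0 1 1) * G)) = 1 := by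
    rw [← hxy, ← hxz, ← hyz, ← mul_assoc, ← mul_assoc]; exact hG
  have c1 : ∀ a b c : ℕ,
      MvPowerSeries.coeff (R := ℤ) (single 0 a + single 1 b + single 2 c)
        ((1 - M 1 0 1) * ((1 - M 0 1 1) * G)) = ind1 a b c := by
    refine solve_rec 1 1 0 (by norm_num) _ 1 h1 ind1
      (fun a b c => if a = 0 ∧ b = 0 ∧ c = 0 then 1 else 0) ?_ ind1_rec
    intro a b c
    rw [MvPowerSeries.coeff_one]
    simp [tri_eq_zero, and_assoc]
  -- step 2
  have c2 : ∀ a b c : ℕ,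
      MvPowerSeries.coeff (R := ℤ) (single 0 a + single 1 b + single 2 c)
        ((1 - M 0 1 1) * G) = ind2 a b c := by
    exact solve_rec 1 0 1 (by norm_num) _ _ rfl ind2 ind1 c1 ind2_rec
  -- step 3
  have c3 : ∀ a b c : ℕ,
      MvPowerSeries.coeff (R := ℤ) (single 0 a + single 1 b + single 2 c) G = ind a b c := by
    exact solve_rec 0 1 1 (by norm_num) _ _ rfl ind ind2 c2 ind_rec
  intro m₁ m₂ m₃
  rw [c3 m₁ m₂ m₃, ind]
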